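/- arXiv:1404.1484 — 3 statements merged into one kernel-verified Lean document; each statement's English description precedes it below -/
import Mathlib

section
/- Let S = {ω_1,…,ω_s} ⊂ [0,1) be a set of pairwise distinct frequencies, let x_1,…,x_s be nonzero complex amplitudes, and let 1 ≤ L < M be integers with L ≥ s and M − L + 1 ≥ s. Then for every ω ∈ [0,1): ω ∈ S if and only if R(ω) = 0, where R is the noise-space correlation function of the Hankel matrix H. -/
open scoped Real
open Matrix Finset

/-- The imaging vector `φ^L(ω) = (e^{−2πi k ω})_{k=0}^{L} ∈ ℂ^{L+1}`. -/
noncomputable def phiVec (L : ℕ) (ω : ℝ) : EuclideanSpace ℂ (Fin (L + 1)) :=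
  WithLp.toLp 2 (fun k : Fin (L + 1) => Complex.exp (-(2 * Real.pi * Complex.I * ((k : ℕ) : ℂ) * (ω : ℂ))))

/-- The node `e(t) = exp(-2πi t)`. -/
noncomputable def nodeC (t : ℝ) : ℂ := Complex.exp (-(2 * Real.pi * Complex.I * (t : ℂ)))

/-- Power vector. -/
noncomputable def pvec (L : ℕ) (z : ℂ) : EuclideanSpace ℂ (Fin (L + 1)) :=
  WithLp.toLp 2 (fun k : Fin (L + 1) => z ^ (k : ℕ))

lemma phiVec_eq_pvec (L : ℕ) (t : ℝ) : phiVec L t = pvec L (nodeC t) := by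
  ext k
  simp only [phiVec, pvec, nodeC, PiLp.toLp_apply, ← Complex.exp_nat_mul]
  ring_nf

lemma nodeC_inj {a b : ℝ} (ha : a ∈ Set.Ico (0:ℝ) 1) (hb : b ∈ Set.Ico (0:ℝ) 1)
    (h : nodeC a = nodeC b) : a = b := by
  rw [nodeC, nodeC, Complex.exp_eq_exp_iff_exists_int] at h
  obtain ⟨n, hn⟩ := h
  have hπ : (Real.pi : ℂ) ≠ 0 := by
    exact_mod_cast Real.pi_ne_zero
  have h2 : (a : ℂ) = (b : ℂ) - n := by
    have hI : (2 : ℂ) * Real.pi * Complex.I ≠ 0 := by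
      simp [Complex.I_ne_zero, hπ]
    have h1 : (2 : ℂ) * Real.pi * Complex.I * a = 2 * Real.pi * Complex.I * ((b : ℂ) - n) := by
      linear_combination -hn
    exact mul_left_cancel₀ hI h1
  have h3 : a = b - n := by exact_mod_cast h2
  have hn0 : (n : ℝ) = 0 := by
    have := ha.1; have := ha.2; have := hb.1; have := hb.2
    have h4 : (n : ℝ) = b - a := by linarith [h3]
    have h5 : (-1 : ℝ) < n := by rw [h4]; linarith
    have h6 : (n : ℝ) < 1 := by rw [h4]; linarith
    have h5' : (-1 : ℤ) < n := by exact_mod_cast h5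
    have h6' : n < (1 : ℤ) := by exact_mod_cast h6
    have : n = 0 := by omega
    simp [this]
  rw [h3, hn0]; ring

/-- Linear independence of power vectors with distinct nodes. -/
lemma pvec_linearIndependent {L m : ℕ} (hm : m ≤ L + 1) {z : Fin m → ℂ}
    (hz : Function.Injective z) :
    LinearIndependent ℂ (fun j => pvec L (z j)) := by
  rw [Fintype.linearIndependent_iff]
  intro g hg
  have key : ∀ i : Fin m, (∑ j, g j * z j ^ (i : ℕ)) = 0 := by
    intro i
    have h0 := congrArg (PiLp.projₗ (𝕜 := ℂ) 2 (fun _ : Fin (L + 1) => ℂ) (Fin.castLE hm i)) hg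
    rw [map_sum] at h0
    simpa [pvec, Fin.coe_castLE] using h0
  have := Matrix.eq_zero_of_forall_pow_sum_mul_pow_eq_zero hz key
  intro j; exact congrFun this j

lemma euclid_sum_apply {n : Type*} [Fintype n] {ι : Type*} (S : Finset ι)
    (f : ι → EuclideanSpace ℂ n) (k : n) :
    (∑ j ∈ S, f j) k = ∑ j ∈ S, f j k :=
  map_sum (PiLp.projₗ (𝕜 := ℂ) 2 (fun _ : n => ℂ) k) f S

lemma hankel_apply {s L M : ℕ} (z : Fin s → ℂ) (x : Fin s → ℂ)
    (H : Matrix (Fin (L + 1)) (Fin (M - L + 1)) ℂ)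
    (hH : ∀ k l, H k l = ∑ j, x j * z j ^ ((k : ℕ) + (l : ℕ)))
    (v : EuclideanSpace ℂ (Fin (M - L + 1))) (k : Fin (L + 1)) :
    Matrix.toEuclideanLin H v k
      = ∑ j, (x j * ∑ l : Fin (M - L + 1), z j ^ (l : ℕ) * v l) * z j ^ (k : ℕ) := by
  have h1 : Matrix.toEuclideanLin H v k = ∑ l, H k l * v l := rfl
  rw [h1]
  simp_rw [hH, Finset.sum_mul, Finset.mul_sum]
  rw [Finset.sum_comm]
  congr 1; funext j
  rw [Finset.sum_mul]
  congr 1; funext l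
  rw [pow_add]; ring

lemma range_eq {s L M : ℕ} (z : Fin s → ℂ) (hz : Function.Injective z)
    (hMs : s ≤ M - L + 1)
    (x : Fin s → ℂ) (hx : ∀ j, x j ≠ 0)
    (H : Matrix (Fin (L + 1)) (Fin (M - L + 1)) ℂ)
    (hH : ∀ k l, H k l = ∑ j, x j * z j ^ ((k : ℕ) + (l : ℕ))) :
    LinearMap.range (Matrix.toEuclideanLin H)
      = Submodule.span ℂ (Set.range fun j => pvec L (z j)) := by
  apply le_antisymm
  · rintro _ ⟨v, rfl⟩
    have heq : Matrix.toEuclideanLin H v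
        = ∑ j, (x j * ∑ l : Fin (M - L + 1), z j ^ (l : ℕ) * v l) • pvec L (z j) := by
      ext k
      rw [hankel_apply z x H hH v k, euclid_sum_apply]
      simp [pvec, PiLp.smul_apply, smul_eq_mul]
    rw [heq]
    exact Submodule.sum_mem _ fun j _ =>
      Submodule.smul_mem _ _ (Submodule.subset_span ⟨j, rfl⟩)
  · rw [Submodule.span_le]
    rintro _ ⟨j, rfl⟩
    set A := Matrix.vandermonde z with hA
    have hdet : A.det ≠ 0 := Matrix.det_vandermonde_ne_zero_iff.mpr hz
    set d : Fin s → ℂ := fun j' => if j' = j then (x j')⁻¹ else 0 with hd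
    set w : Fin s → ℂ := A⁻¹ *ᵥ d with hw
    have hAw : A *ᵥ w = d := by
      rw [hw, Matrix.mulVec_mulVec, Matrix.mul_nonsing_inv _ (isUnit_iff_ne_zero.mpr hdet),
        Matrix.one_mulVec]
    set g : Fin s → ℕ → ℂ :=
      fun j' i => z j' ^ i * (if h : i < s then w ⟨i, h⟩ else 0) with hg
    set v : EuclideanSpace ℂ (Fin (M - L + 1)) :=
      WithLp.toLp 2 (fun l : Fin (M - L + 1) => if h : (l : ℕ) < s then w ⟨(l : ℕ), h⟩ else 0) with hv
    have key : ∀ j', (∑ l : Fin (M - L + 1), z j' ^ (l : ℕ) * v l) = d j' := by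
      intro j'
      have e1 : (∑ l : Fin (M - L + 1), z j' ^ (l : ℕ) * v l)
          = ∑ i ∈ Finset.range (M - L + 1), g j' i :=
        Fin.sum_univ_eq_sum_range (g j') (M - L + 1)
      have e2 : ∑ i ∈ Finset.range (M - L + 1), g j' i = ∑ i ∈ Finset.range s, g j' i := by
        refine (Finset.sum_subset (Finset.range_subset_range.mpr hMs) ?_).symm
        intro i _ hi
        rw [Finset.mem_range, not_lt] at hi
        simp [hg, dif_neg (not_lt.mpr hi)]
      have e3 : ∑ i ∈ Finset.range s, g j' i = ∑ i : Fin s, z j' ^ (i : ℕ) * w i := by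
        rw [← Fin.sum_univ_eq_sum_range (g j') s]
        congr 1; funext i
        simp [hg, dif_pos i.isLt]
      have e4 : (∑ i : Fin s, z j' ^ (i : ℕ) * w i) = d j' := by
        have := congrFun hAw j'
        simpa [hA, Matrix.mulVec, dotProduct, Matrix.vandermonde] using this
      rw [e1, e2, e3, e4]
    refine ⟨v, ?_⟩
    ext k
    rw [hankel_apply z x H hH v k]
    simp_rw [key]
    rw [Finset.sum_eq_single j]
    · simp [hd, pvec, hx j]
    · intro b _ hb; simp [hd, hb]
    · intro h; exact absurd (Finset.mem_univ j) h

lemma nodeC_pow (n : ℕ) (t : ℝ) :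
    nodeC t ^ n = Complex.exp (-(2 * Real.pi * Complex.I * (n : ℂ) * (t : ℂ))) := by
  rw [nodeC, ← Complex.exp_nat_mul]
  ring_nf

theorem stmt0 (s L M : ℕ) (hs : 1 ≤ s) (hL : 1 ≤ L) (hLM : L < M)
    (hLs : s ≤ L) (hMs : s ≤ M - L + 1)
    (ω : Fin s → ℝ) (hdist : Function.Injective ω)
    (hω : ∀ j, ω j ∈ Set.Ico (0 : ℝ) 1)
    (x : Fin s → ℂ) (hx : ∀ j, x j ≠ 0)
    (y : ℕ → ℂ)
    (hy : ∀ k : ℕ, y k = ∑ j, x j *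
      Complex.exp (-(2 * Real.pi * Complex.I * (k : ℂ) * (ω j : ℂ))))
    (H : Matrix (Fin (L + 1)) (Fin (M - L + 1)) ℂ)
    (hH : ∀ (k : Fin (L + 1)) (l : Fin (M - L + 1)), H k l = y ((k : ℕ) + (l : ℕ)))
    (R : ℝ → ℝ)
    (hR : ∀ t, R t =
      ‖(Submodule.orthogonalProjection (LinearMap.range (Matrix.toEuclideanLin H))ᗮ (phiVec L t) :
        EuclideanSpace ℂ (Fin (L + 1)))‖ / ‖phiVec L t‖) :
    ∀ t ∈ Set.Ico (0 : ℝ) 1, (∃ j, t = ω j) ↔ R t = 0 := by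
  intro t ht
  set z : Fin s → ℂ := fun j => nodeC (ω j) with hz
  have hzinj : Function.Injective z := fun a b h => hdist (nodeC_inj (hω a) (hω b) h)
  have hHz : ∀ (k : Fin (L + 1)) (l : Fin (M - L + 1)),
      H k l = ∑ j, x j * z j ^ ((k : ℕ) + (l : ℕ)) := by
    intro k l
    rw [hH, hy]
    congr 1; funext j
    rw [hz]
    rw [nodeC_pow]
  have hrange := range_eq z hzinj hMs x hx H hHz
  have hφ : phiVec L t ≠ 0 := by
    intro h
    exact Complex.exp_ne_zero _ (congrArg (fun v : EuclideanSpace ℂ (Fin (L + 1)) => v 0) h)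
  have hden : ‖phiVec L t‖ ≠ 0 := norm_ne_zero_iff.mpr hφ
  have hmem : phiVec L t ∈ LinearMap.range (Matrix.toEuclideanLin H) ↔ (∃ j, t = ω j) := by
    rw [hrange]
    constructor
    · intro hmemV
      by_contra hcon
      push_neg at hcon
      have hinj' : Function.Injective (Fin.cons (nodeC t) z : Fin (s + 1) → ℂ) := by
        rw [Fin.cons_injective_iff]
        refine ⟨?_, hzinj⟩
        rintro ⟨j, hj⟩
        exact hcon j (nodeC_inj ht (hω j) hj.symm)
      have hli := pvec_linearIndependent (L := L) (m := s + 1) (by omega) hinj'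
      have hcomp : (fun i => pvec L ((Fin.cons (nodeC t) z : Fin (s + 1) → ℂ) i))
          = Fin.cons (pvec L (nodeC t)) (fun j => pvec L (z j)) := by
        funext i
        refine Fin.cases rfl (fun j => rfl) i
      rw [hcomp, linearIndependent_fin_cons] at hli
      exact hli.2 (phiVec_eq_pvec L t ▸ hmemV)
    · rintro ⟨j, rfl⟩
      rw [phiVec_eq_pvec]
      exact Submodule.subset_span ⟨j, rfl⟩
  have h1 : ‖(Submodule.orthogonalProjection (LinearMap.range (Matrix.toEuclideanLin H))ᗮ (phiVec L t) :
      EuclideanSpace ℂ (Fin (L + 1)))‖ = 0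
      ↔ phiVec L t ∈ LinearMap.range (Matrix.toEuclideanLin H) := by
    rw [norm_eq_zero, ZeroMemClass.coe_eq_zero, Submodule.orthogonalProjectionOnto_eq_zero_iff,
      Submodule.orthogonal_orthogonal]
  rw [hR t, div_eq_zero_iff]
  constructor
  · intro hex
    exact Or.inl (h1.mpr (hmem.mpr hex))
  · rintro (h | h)
    · exact hmem.mp (h1.mp h)
    · exact absurd h hden
end

section
/- (Poisson summation identity for the cosine window.) Let L ≥ 1 be an integer and g(t) = cos(π(t − 1/2)). Then for every ω ∈ ℝ such that 4L²(ω − r)² ≠ 1 for all r ∈ ℤ, (1/L)·Σ_{k=0}^{L} g(k/L) e^{2πi k ω} = (2/π)·Σ_{r∈ℤ} [cos(πL(ω − r)) / (1 − 4L²(ω − r)²)]·e^{iπL(ω − r)}, where the series on the right converges absolutely. -/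
open scoped Real
open Finset

/-- The summand of the bilateral Poisson series:
`(cos(πL(ω − r)) / (1 − 4L²(ω − r)²)) · e^{iπL(ω − r)}`. -/
noncomputable def poissonTerm (L : ℕ) (ω : ℝ) (r : ℤ) : ℂ :=
  ((Real.cos (Real.pi * L * (ω - r)) / (1 - 4 * (L : ℝ) ^ 2 * (ω - r) ^ 2) : ℝ) : ℂ) *
    Complex.exp (Complex.I * Real.pi * L * ((ω : ℂ) - (r : ℂ)))

namespace Stmt9Aux

open scoped FourierTransform
open MeasureTheory


lemma abs_poissonTerm_le (L : ℕ) (ω : ℝ) (r : ℤ) :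
    ‖poissonTerm L ω r‖ ≤ |1 - 4 * (L : ℝ) ^ 2 * (ω - r) ^ 2|⁻¹ := by
  unfold poissonTerm
  rw [norm_mul]
  have h1 : ‖(Complex.exp (Complex.I * Real.pi * L * ((ω : ℂ) - (r : ℂ))))‖ = 1 := by
    have : (Complex.I * Real.pi * L * ((ω : ℂ) - (r : ℂ))) =
        Complex.I * ((Real.pi * L * (ω - r) : ℝ) : ℂ) := by push_cast; ring
    rw [this, Complex.norm_exp, Complex.I_mul_re, Complex.ofReal_im, neg_zero, Real.exp_zero]
  rw [h1, mul_one, Complex.norm_real, Real.norm_eq_abs, abs_div]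
  rcases eq_or_ne (1 - 4 * (L : ℝ) ^ 2 * (ω - r) ^ 2) 0 with h | h
  · simp [h]
  · rw [div_le_iff₀ (abs_pos.mpr h), inv_mul_cancel₀ (abs_ne_zero.mpr h)]
    exact Real.abs_cos_le_one _

lemma summable_inv_denom (L : ℕ) (hL : 1 ≤ L) (ω : ℝ) :
    Summable (fun r : ℤ => |1 - 4 * (L : ℝ) ^ 2 * (ω - r) ^ 2|⁻¹) := by
  have hs : Summable (fun r : ℤ => 1 / (r : ℝ) ^ 2) :=
    Real.summable_one_div_int_pow.mpr one_lt_two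
  apply summable_of_isBigO hs
  rw [Asymptotics.isBigO_iff]
  refine ⟨1, ?_⟩
  rw [Filter.eventually_cofinite]
  apply Set.Finite.subset (Set.finite_Icc (-(⌈2 * |ω| + 2⌉) : ℤ) ⌈2 * |ω| + 2⌉)
  intro r hr
  simp only [Set.mem_setOf_eq, not_le] at hr
  by_contra hmem
  simp only [Set.mem_Icc, not_and_or, not_le] at hmem
  have hM : (⌈2 * |ω| + 2⌉ : ℤ) ≤ |r| := by
    rcases hmem with h | h
    · exact le_abs.mpr (Or.inr (by omega))
    · exact le_abs.mpr (Or.inl (le_of_lt h))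
  have hry : 2 * |ω| + 2 ≤ |(r : ℝ)| := by
    have h1 : ((⌈2 * |ω| + 2⌉ : ℤ) : ℝ) ≤ ((|r| : ℤ) : ℝ) := by exact_mod_cast hM
    rw [Int.cast_abs] at h1
    linarith [Int.le_ceil (2 * |ω| + 2)]
  set y := (r : ℝ) with hy
  have hL1 : (1 : ℝ) ≤ (L : ℝ) := by exact_mod_cast hL
  have habs : |y| - |ω| ≤ |ω - y| := by
    have := abs_sub_abs_le_abs_sub y ω
    rwa [abs_sub_comm] at this
  have h3 : |y| / 2 + 1 ≤ |y| - |ω| := by linarith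
  have hsq : (|y| / 2 + 1) ^ 2 ≤ (ω - y) ^ 2 := by
    have h0 : (0:ℝ) ≤ |y| / 2 + 1 := by positivity
    calc (|y| / 2 + 1) ^ 2 ≤ (|y| - |ω|) ^ 2 := by nlinarith
      _ ≤ |ω - y| ^ 2 := by nlinarith [abs_nonneg (ω - y), abs_nonneg ω, abs_nonneg y]
      _ = (ω - y) ^ 2 := sq_abs _
  have key : y ^ 2 + 1 ≤ 4 * (L:ℝ)^2 * (ω - y)^2 := by
    have hL2 : (1:ℝ) ≤ (L:ℝ)^2 := by nlinarith
    have h4 : 4 * (ω - y)^2 ≤ 4 * (L:ℝ)^2 * (ω - y)^2 := by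
      nlinarith [sq_nonneg (ω - y)]
    nlinarith [sq_abs y, abs_nonneg y]
  have hy2 : (0:ℝ) < y ^ 2 := by nlinarith [sq_abs y, abs_nonneg ω]
  have hA : y ^ 2 ≤ |1 - 4 * (L:ℝ)^2 * (ω - y)^2| := by
    rw [abs_of_nonpos (by linarith)]; linarith
  have h5 : |1 - 4 * (L:ℝ)^2 * (ω - y)^2|⁻¹ ≤ (y ^ 2)⁻¹ :=
    inv_anti₀ hy2 hA
  have hle : ‖|1 - 4 * (L:ℝ)^2 * (ω - y)^2|⁻¹‖ ≤ 1 * ‖1 / y ^ 2‖ := by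
    calc ‖|1 - 4 * (L:ℝ)^2 * (ω - y)^2|⁻¹‖ = |1 - 4 * (L:ℝ)^2 * (ω - y)^2|⁻¹ := by
          rw [Real.norm_eq_abs, abs_of_nonneg (by positivity)]
      _ ≤ (y ^ 2)⁻¹ := h5
      _ ≤ 1 * ‖1 / y ^ 2‖ := by
          rw [one_mul, Real.norm_eq_abs, one_div, abs_of_nonneg (by positivity)]
  exact absurd hr (not_lt.mpr hle)

lemma summable_abs_poissonTerm (L : ℕ) (hL : 1 ≤ L) (ω : ℝ) :
    Summable (fun r : ℤ => ‖poissonTerm L ω r‖) :=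
  Summable.of_nonneg_of_le (fun r => norm_nonneg _)
    (fun r => abs_poissonTerm_le L ω r) (summable_inv_denom L hL ω)


noncomputable def core (L : ℕ) (ω : ℝ) (t : ℝ) : ℂ :=
  ((Real.cos (Real.pi * (t / L - 1 / 2)) : ℝ) : ℂ) *
    Complex.exp (2 * Real.pi * Complex.I * (t : ℂ) * (ω : ℂ))

noncomputable def F (L : ℕ) (ω : ℝ) (t : ℝ) : ℂ :=
  if 0 ≤ t then (if t ≤ (L : ℝ) then core L ω t else 0) else 0

lemma core_zero (L : ℕ) (ω : ℝ) : core L ω 0 = 0 := by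
  have h : Real.cos (Real.pi * ((0:ℝ) / L - 1 / 2)) = 0 := by
    rw [show Real.pi * ((0:ℝ) / L - 1 / 2) = -(Real.pi / 2) by rw [zero_div]; ring,
      Real.cos_neg, Real.cos_pi_div_two]
  simp only [core, h]
  simp

lemma core_L (L : ℕ) (hL : 1 ≤ L) (ω : ℝ) : core L ω L = 0 := by
  have hL0 : (L : ℝ) ≠ 0 := by positivity
  have h : Real.cos (Real.pi * ((L:ℝ) / L - 1 / 2)) = 0 := by
    rw [show Real.pi * ((L:ℝ) / L - 1 / 2) = Real.pi / 2 by rw [div_self hL0]; ring,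
      Real.cos_pi_div_two]
  simp only [core, h]
  simp

lemma continuous_core (L : ℕ) (ω : ℝ) : Continuous (core L ω) := by
  unfold core
  fun_prop

lemma continuous_F (L : ℕ) (hL : 1 ≤ L) (ω : ℝ) : Continuous (F L ω) := by
  unfold F
  have h1 : Continuous fun t : ℝ => if t ≤ (L : ℝ) then core L ω t else 0 := by
    apply Continuous.if_le (continuous_core L ω) continuous_const continuous_id
      continuous_const
    intro x hx
    simp only [id_eq] at hx
    rw [hx, core_L L hL ω]
  apply Continuous.if_le h1 continuous_const continuous_const continuous_id
  intro x hx
  simp only [id_eq] at hx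
  rw [← hx]
  rw [if_pos (by norm_num : (0:ℝ) ≤ (L:ℝ)), core_zero]

lemma F_eq_indicator (L : ℕ) (ω : ℝ) :
    F L ω = Set.indicator (Set.Icc (0:ℝ) (L:ℝ)) (core L ω) := by
  ext t
  rw [Set.indicator_apply]
  simp only [Set.mem_Icc, F]
  by_cases h0 : 0 ≤ t <;> by_cases h1 : t ≤ (L:ℝ) <;> simp [h0, h1]

lemma F_apply_of_mem (L : ℕ) (ω : ℝ) {t : ℝ} (h0 : 0 ≤ t) (h1 : t ≤ L) :
    F L ω t = core L ω t := by rw [F, if_pos h0, if_pos h1]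

lemma F_bigO (L : ℕ) (ω : ℝ) :
    (F L ω) =O[Filter.cocompact ℝ] fun x : ℝ => |x| ^ (-(2:ℝ)) := by
  have hzero : F L ω =ᶠ[Filter.cocompact ℝ] (fun _ => (0:ℂ)) := by
    have hmem : (Set.Icc (0:ℝ) (L:ℝ))ᶜ ∈ Filter.cocompact ℝ :=
      Filter.mem_cocompact.mpr ⟨Set.Icc 0 L, isCompact_Icc, subset_rfl⟩
    filter_upwards [hmem] with t ht
    rw [F_eq_indicator, Set.indicator_of_notMem ht]
  exact hzero.trans_isBigO (Asymptotics.isBigO_zero _ _)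

lemma cos_def (z : ℂ) : Complex.cos z = (Complex.exp (z*Complex.I) + Complex.exp (-z*Complex.I))/2 := rfl

lemma poissonTerm_eq (L : ℕ) (ω : ℝ) (n : ℤ)
    (hden : (1 - 4 * (L : ℝ) ^ 2 * (ω - (n:ℝ)) ^ 2) ≠ 0) :
    poissonTerm L ω n =
      (Complex.exp ((Real.pi * L * (ω - n) : ℝ) * Complex.I) ^ 2 + 1) /
        (2 * ((1 - 4 * (L : ℝ) ^ 2 * (ω - (n:ℝ)) ^ 2 : ℝ) : ℂ)) := by
  unfold poissonTerm
  have h1 : Complex.I * (Real.pi : ℂ) * (L : ℂ) * ((ω : ℂ) - (n : ℂ)) =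
      ((Real.pi * L * (ω - n) : ℝ) : ℂ) * Complex.I := by push_cast; ring
  rw [h1, Complex.ofReal_div, Complex.ofReal_cos, cos_def]
  set z := ((Real.pi * L * (ω - n) : ℝ) : ℂ)
  have h2 : Complex.exp (-z * Complex.I) = (Complex.exp (z * Complex.I))⁻¹ := by
    rw [← Complex.exp_neg]; ring_nf
  rw [h2]
  have h3 := Complex.exp_ne_zero (z * Complex.I)
  have key : (Complex.exp (z*Complex.I) + (Complex.exp (z*Complex.I))⁻¹) * Complex.exp (z*Complex.I)
      = Complex.exp (z*Complex.I)^2 + 1 := by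
    rw [add_mul, inv_mul_cancel₀ h3, sq]
  rw [div_div, div_mul_eq_mul_div, key]

lemma final_algebra (p l a b Q : ℂ) (hp : p ≠ 0) (hl : l ≠ 0) (ha : a ≠ 0)
    (hb : b ≠ 0) (hba : b - a = -(2*p/l)) :
    -Complex.I/2 * ((-Q^2 - 1) / (a * Complex.I)) +
      Complex.I/2 * ((-Q^2 - 1) / (b * Complex.I)) =
    2*l/p * ((Q^2+1) / (2 * (-(l^2/p^2) * (a * b)))) := by
  have hI := Complex.I_ne_zero
  have t1 : -Complex.I/2 * ((-Q^2 - 1) / (a * Complex.I)) = (Q^2+1)/(2*a) := by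
    field_simp
    ring
  have t2 : Complex.I/2 * ((-Q^2 - 1) / (b * Complex.I)) = -((Q^2+1)/(2*b)) := by
    field_simp
    ring
  rw [t1, t2, ← sub_eq_add_neg, div_sub_div _ _ (by simpa using ha) (by simpa using hb)]
  have hba' : (b - a) * l = -(2*p) := by
    rw [hba]; field_simp
  have hnum : (Q^2+1)*(2*b) - (2*a)*(Q^2+1) = (-(4*p)*(Q^2+1))/l := by
    rw [eq_div_iff hl]
    linear_combination (2*(Q^2+1)) * hba'
  rw [hnum, div_div]
  have hden2 : 2 * (-(l^2/p^2) * (a*b)) = (-(2*l^2*a*b))/p^2 := by ring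
  rw [hden2, div_div_eq_mul_div, div_mul_div_comm]
  rw [div_eq_div_iff (mul_ne_zero hl (mul_ne_zero (mul_ne_zero two_ne_zero ha) (mul_ne_zero two_ne_zero hb))) (mul_ne_zero hp (by intro h; apply mul_ne_zero (mul_ne_zero (mul_ne_zero (by norm_num : (-2:ℂ) ≠ 0) (pow_ne_zero 2 hl)) ha) hb ?_; linear_combination h))]
  ring

set_option maxHeartbeats 1000000 in
lemma fourier_F (L : ℕ) (hL : 1 ≤ L) (ω : ℝ) (n : ℤ)
    (hn : 4 * (L : ℝ) ^ 2 * (ω - n) ^ 2 ≠ 1) :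
    𝓕 (F L ω) (n : ℝ) = (2 * (L : ℂ) / (Real.pi : ℂ)) * poissonTerm L ω n := by
  have hL0 : (L : ℝ) ≠ 0 := by positivity
  have hπ : (Real.pi : ℝ) ≠ 0 := Real.pi_ne_zero
  set θ : ℝ := ω - n with hθ
  -- the two frequencies
  set c₁ : ℝ := Real.pi / L + 2 * Real.pi * θ with hc₁def
  set c₂ : ℝ := -(Real.pi / L) + 2 * Real.pi * θ with hc₂def
  have hfac : c₁ * c₂ = -(Real.pi^2 / L^2) * (1 - 4 * (L:ℝ)^2 * θ^2) := by
    rw [hc₁def, hc₂def]; field_simp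
    ring
  have hden : (1 - 4 * (L:ℝ)^2 * θ^2) ≠ 0 := by
    intro h; apply hn; rw [← hθ] at *; nlinarith [h]
  have hA : -(Real.pi^2 / (L:ℝ)^2) ≠ 0 := by
    have : Real.pi^2/(L:ℝ)^2 ≠ 0 := by positivity
    exact neg_ne_zero.mpr this
  have hc₁ : c₁ ≠ 0 := by
    intro h; rw [h, zero_mul] at hfac
    exact mul_ne_zero hA hden hfac.symm
  have hc₂ : c₂ ≠ 0 := by
    intro h; rw [h, mul_zero] at hfac
    exact mul_ne_zero hA hden hfac.symm
  have hπC : (Real.pi : ℂ) ≠ 0 := Complex.ofReal_ne_zero.mpr hπ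
  have hLC : (L : ℂ) ≠ 0 := by exact_mod_cast hL0
  -- pass to an interval integral
  rw [Real.fourier_real_eq_integral_exp_smul]
  have hind : ∀ v : ℝ, Complex.exp (((-2 * Real.pi * v * (n:ℝ) : ℝ) : ℂ) * Complex.I) • F L ω v =
      Set.indicator (Set.Icc (0:ℝ) (L:ℝ))
        (fun v => Complex.exp (((-2 * Real.pi * v * (n:ℝ) : ℝ) : ℂ) * Complex.I) * core L ω v) v := by
    intro v
    rw [F_eq_indicator]
    by_cases h : v ∈ Set.Icc (0:ℝ) (L:ℝ)
    · rw [Set.indicator_of_mem h, Set.indicator_of_mem h, smul_eq_mul]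
    · rw [Set.indicator_of_notMem h, Set.indicator_of_notMem h, smul_zero]
  simp_rw [hind]
  rw [MeasureTheory.integral_indicator measurableSet_Icc,
    MeasureTheory.integral_Icc_eq_integral_Ioc,
    ← intervalIntegral.integral_of_le (by positivity : (0:ℝ) ≤ (L:ℝ))]
  -- rewrite the integrand as a combination of exponentials
  have hcong : Set.EqOn (fun v : ℝ => Complex.exp (((-2 * Real.pi * v * (n:ℝ) : ℝ) : ℂ) * Complex.I) * core L ω v)
      (fun v : ℝ => (-Complex.I/2) * Complex.exp (((c₁ : ℝ):ℂ) * Complex.I * (v:ℝ)) +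
        (Complex.I/2) * Complex.exp (((c₂ : ℝ):ℂ) * Complex.I * (v:ℝ)))
      (Set.uIcc (0:ℝ) (L:ℝ)) := by
    intro v _
    simp only [core]
    rw [Complex.ofReal_cos, cos_def]
    have step : Complex.exp (((-2 * Real.pi * v * (n:ℝ) : ℝ) : ℂ) * Complex.I) *
        ((Complex.exp (((Real.pi * (v / L - 1/2) : ℝ):ℂ) * Complex.I) +
          Complex.exp (-((Real.pi * (v / L - 1/2) : ℝ):ℂ) * Complex.I)) / 2 *
          Complex.exp (2 * (Real.pi:ℂ) * Complex.I * (v:ℂ) * (ω:ℂ))) =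
        (Complex.exp ((((-2 * Real.pi * v * (n:ℝ) : ℝ) : ℂ)) * Complex.I +
            ((Real.pi * (v / L - 1/2) : ℝ):ℂ) * Complex.I +
            2 * (Real.pi:ℂ) * Complex.I * (v:ℂ) * (ω:ℂ)) +
         Complex.exp ((((-2 * Real.pi * v * (n:ℝ) : ℝ) : ℂ)) * Complex.I +
            -((Real.pi * (v / L - 1/2) : ℝ):ℂ) * Complex.I +
            2 * (Real.pi:ℂ) * Complex.I * (v:ℂ) * (ω:ℂ))) / 2 := by
      rw [Complex.exp_add, Complex.exp_add, Complex.exp_add, Complex.exp_add]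
      ring
    rw [step]
    have e1 : (((-2 * Real.pi * v * (n:ℝ) : ℝ) : ℂ)) * Complex.I +
        ((Real.pi * (v / L - 1/2) : ℝ):ℂ) * Complex.I +
        2 * (Real.pi:ℂ) * Complex.I * (v:ℂ) * (ω:ℂ) =
        ((c₁ : ℝ):ℂ) * Complex.I * (v:ℝ) + ((-(Real.pi/2) : ℝ):ℂ) * Complex.I := by
      rw [hc₁def, hθ]; push_cast; field_simp; ring
    have e2 : (((-2 * Real.pi * v * (n:ℝ) : ℝ) : ℂ)) * Complex.I +
        -((Real.pi * (v / L - 1/2) : ℝ):ℂ) * Complex.I +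
        2 * (Real.pi:ℂ) * Complex.I * (v:ℂ) * (ω:ℂ) =
        ((c₂ : ℝ):ℂ) * Complex.I * (v:ℝ) + (((Real.pi/2) : ℝ):ℂ) * Complex.I := by
      rw [hc₂def, hθ]; push_cast; field_simp; ring
    rw [e1, e2, Complex.exp_add, Complex.exp_add]
    have v1 : Complex.exp (((-(Real.pi/2) : ℝ):ℂ) * Complex.I) = -Complex.I := by
      rw [Complex.exp_mul_I, ← Complex.ofReal_cos, ← Complex.ofReal_sin]
      simp [Real.cos_pi_div_two, Real.sin_pi_div_two]
    have v2 : Complex.exp ((((Real.pi/2) : ℝ):ℂ) * Complex.I) = Complex.I := by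
      rw [Complex.exp_mul_I, ← Complex.ofReal_cos, ← Complex.ofReal_sin]
      simp [Real.cos_pi_div_two, Real.sin_pi_div_two]
    rw [v1, v2]
    ring
  rw [intervalIntegral.integral_congr hcong]
  have i1 : IntervalIntegrable (fun v : ℝ => (-Complex.I/2) * Complex.exp (((c₁ : ℝ):ℂ) * Complex.I * (v:ℝ))) MeasureTheory.volume 0 (L:ℝ) :=
    Continuous.intervalIntegrable (by fun_prop) 0 (L:ℝ)
  have i2 : IntervalIntegrable (fun v : ℝ => (Complex.I/2) * Complex.exp (((c₂ : ℝ):ℂ) * Complex.I * (v:ℝ))) MeasureTheory.volume 0 (L:ℝ) :=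
    Continuous.intervalIntegrable (by fun_prop) 0 (L:ℝ)
  rw [intervalIntegral.integral_add i1 i2, intervalIntegral.integral_const_mul,
    intervalIntegral.integral_const_mul]
  have hC₁ : ((c₁ : ℝ):ℂ) * Complex.I ≠ 0 :=
    mul_ne_zero (Complex.ofReal_ne_zero.mpr hc₁) Complex.I_ne_zero
  have hC₂ : ((c₂ : ℝ):ℂ) * Complex.I ≠ 0 :=
    mul_ne_zero (Complex.ofReal_ne_zero.mpr hc₂) Complex.I_ne_zero
  rw [integral_exp_mul_complex hC₁, integral_exp_mul_complex hC₂]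
  -- evaluate the endpoint exponentials
  set z : ℂ := ((Real.pi * L * (ω - n) : ℝ) : ℂ) with hz
  have hQ1 : Complex.exp (((c₁ : ℝ):ℂ) * Complex.I * ((L:ℝ):ℂ)) = -(Complex.exp (z * Complex.I))^2 := by
    have harg : ((c₁ : ℝ):ℂ) * Complex.I * ((L:ℝ):ℂ) = (Real.pi:ℂ) * Complex.I + (z * Complex.I + z * Complex.I) := by
      rw [hc₁def, hθ, hz]; push_cast; field_simp
      ring
    rw [harg, Complex.exp_add, Complex.exp_add, Complex.exp_pi_mul_I]; ring
  have hQ2 : Complex.exp (((c₂ : ℝ):ℂ) * Complex.I * ((L:ℝ):ℂ)) = -(Complex.exp (z * Complex.I))^2 := by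
    have harg : ((c₂ : ℝ):ℂ) * Complex.I * ((L:ℝ):ℂ) = -((Real.pi:ℂ) * Complex.I) + (z * Complex.I + z * Complex.I) := by
      rw [hc₂def, hθ, hz]; push_cast; field_simp
      ring
    rw [harg, Complex.exp_add, Complex.exp_add, Complex.exp_neg, Complex.exp_pi_mul_I]
    norm_num; ring
  rw [hQ1, hQ2]
  simp only [Complex.ofReal_zero, mul_zero, Complex.exp_zero]
  -- final algebra
  rw [poissonTerm_eq L ω n (by rw [← hθ]; exact hden)]
  set Q : ℂ := Complex.exp (z * Complex.I) with hQ
  have hdenC : ((1 - 4 * (L : ℝ) ^ 2 * (ω - (n:ℝ)) ^ 2 : ℝ) : ℂ) ≠ 0 := by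
    rw [← hθ] at *; exact Complex.ofReal_ne_zero.mpr hden
  have hfacC : ((c₁:ℝ):ℂ) * ((c₂:ℝ):ℂ) =
      -((Real.pi:ℂ)^2 / (L:ℂ)^2) * ((1 - 4 * (L : ℝ) ^ 2 * (ω - (n:ℝ)) ^ 2 : ℝ) : ℂ) := by
    rw [← Complex.ofReal_mul, hfac, hθ]; push_cast; ring
  have hc1C : ((c₁:ℝ):ℂ) ≠ 0 := Complex.ofReal_ne_zero.mpr hc₁
  have hsub : ((c₂:ℝ):ℂ) = ((c₁:ℝ):ℂ) - 2*(Real.pi:ℂ)/(L:ℂ) := by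
    rw [hc₁def, hc₂def]; push_cast; ring
  have hc2C : ((c₁:ℝ):ℂ) - 2*(Real.pi:ℂ)/(L:ℂ) ≠ 0 := by
    rw [← hsub]; exact Complex.ofReal_ne_zero.mpr hc₂
  have hd : ((1 - 4 * (L : ℝ) ^ 2 * (ω - (n:ℝ)) ^ 2 : ℝ) : ℂ) =
      -((L:ℂ)^2/(Real.pi:ℂ)^2) * (((c₁:ℝ):ℂ) * (((c₁:ℝ):ℂ) - 2*(Real.pi:ℂ)/(L:ℂ))) := by
    rw [← hsub, hfacC]
    field_simp
  rw [hsub, hd]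
  exact final_algebra (Real.pi:ℂ) (L:ℂ) ((c₁:ℝ):ℂ) (((c₁:ℝ):ℂ) - 2*(Real.pi:ℂ)/(L:ℂ)) Q
    hπC hLC hc1C hc2C (by ring)


lemma sum_F (L : ℕ) (hL : 1 ≤ L) (ω : ℝ) :
    ∑' n : ℤ, F L ω ((0:ℝ) + (n:ℝ)) = ∑ k ∈ Finset.range (L+1), core L ω (k:ℝ) := by
  have h0 : ∀ n : ℤ, n ∉ Finset.Icc (0:ℤ) (L:ℤ) → F L ω ((0:ℝ) + (n:ℝ)) = 0 := by
    intro n hn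
    rw [zero_add]
    simp only [Finset.mem_Icc, not_and_or, not_le] at hn
    rcases hn with h | h
    · rw [F, if_neg (by exact_mod_cast not_le.mpr (by exact_mod_cast h : (n:ℝ) < 0))]
    · rw [F]
      have hnr : ¬ ((n:ℝ) ≤ (L:ℝ)) := by
        push_neg
        exact_mod_cast h
      by_cases h0' : (0:ℝ) ≤ (n:ℝ)
      · rw [if_pos h0', if_neg hnr]
      · rw [if_neg h0']
  rw [tsum_eq_sum h0]
  refine Finset.sum_nbij' (i := fun (n : ℤ) => n.toNat) (j := fun (k : ℕ) => (k:ℤ))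
    ?_ ?_ ?_ ?_ ?_
  · intro n hn
    simp only [Finset.mem_Icc] at hn
    simp only [Finset.mem_range]
    omega
  · intro k hk
    simp only [Finset.mem_range] at hk
    simp only [Finset.mem_Icc]
    omega
  · intro n hn
    simp only [Finset.mem_Icc] at hn
    show ((n.toNat : ℕ) : ℤ) = n
    omega
  · intro k _; simp
  · intro n hn
    simp only [Finset.mem_Icc] at hn
    have h1 : ((n.toNat : ℕ) : ℝ) = (n : ℝ) := by
      have := Int.toNat_of_nonneg hn.1
      exact_mod_cast congrArg (fun m : ℤ => (m : ℝ)) this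
    rw [zero_add, F_apply_of_mem L ω (by exact_mod_cast hn.1) (by exact_mod_cast hn.2), h1]

end Stmt9Aux

theorem stmt9 (L : ℕ) (hL : 1 ≤ L) (ω : ℝ)
    (hω : ∀ r : ℤ, 4 * (L : ℝ) ^ 2 * (ω - r) ^ 2 ≠ 1) :
    Summable (fun r : ℤ => ‖poissonTerm L ω r‖) ∧
    (1 / (L : ℂ)) * ∑ k ∈ Finset.range (L + 1),
        (Real.cos (Real.pi * ((k : ℝ) / L - 1 / 2)) : ℂ) *
          Complex.exp (2 * Real.pi * Complex.I * (k : ℂ) * (ω : ℂ)) =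
      (2 / (Real.pi : ℂ)) * ∑' r : ℤ, poissonTerm L ω r := by
  open Stmt9Aux in
  open scoped FourierTransform in
  have h1 := summable_abs_poissonTerm L hL ω
  refine ⟨h1, ?_⟩
  have hsum : Summable (fun r : ℤ => poissonTerm L ω r) := by
    apply Summable.of_norm
    simpa using h1
  have hFf : ∀ n : ℤ, 𝓕 (F L ω) (n:ℝ) = (2*(L:ℂ)/(Real.pi:ℂ)) * poissonTerm L ω n :=
    fun n => fourier_F L hL ω n (fun h => hω n (by linarith [h]))
  have hFsummable : Summable (fun n : ℤ => 𝓕 (F L ω) (n:ℝ)) :=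
    Summable.congr (hsum.mul_left (2*(L:ℂ)/(Real.pi:ℂ))) (fun n => (hFf n).symm)
  have hP := Real.tsum_eq_tsum_fourier_of_rpow_decay_of_summable
      (continuous_F L hL ω) one_lt_two (F_bigO L ω) hFsummable 0
  rw [sum_F L hL ω] at hP
  have hfour : ∀ n : ℤ, 𝓕 (F L ω) (n:ℝ) * fourier n ((0:ℝ) : UnitAddCircle) =
      (2*(L:ℂ)/(Real.pi:ℂ)) * poissonTerm L ω n := by
    intro n
    rw [hFf n]
    simp
  rw [tsum_congr hfour, tsum_mul_left] at hP
  have hgoal : ∑ k ∈ Finset.range (L + 1),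
      (Real.cos (Real.pi * ((k : ℝ) / L - 1 / 2)) : ℂ) *
        Complex.exp (2 * Real.pi * Complex.I * (k : ℂ) * (ω : ℂ)) =
      ∑ k ∈ Finset.range (L+1), core L ω (k:ℝ) := by
    apply Finset.sum_congr rfl
    intro k _
    rw [core]
    norm_cast
  rw [hgoal, hP]
  have hπC : (Real.pi : ℂ) ≠ 0 := Complex.ofReal_ne_zero.mpr Real.pi_ne_zero
  have hLC : (L : ℂ) ≠ 0 := by
    have : (L:ℝ) ≠ 0 := by positivity
    exact_mod_cast this
  field_simp
end

section
/- Let S = {ω_1,…,ω_s} ⊂ [0,1) be pairwise distinct, x_1,…,x_s nonzero, L ≥ s, M − L + 1 ≥ s, and H = Φ^L X (Φ^{M−L})^T with X = diag(x_1,…,x_s). Let H^ε = H + E with ‖E‖_2 < σ_s (σ_s the smallest nonzero singular value of H). Then for each j = 1,…,s, R^ε(ω_j) ≤ 2‖E‖_2 / (x_min · σ_min((Φ^{M−L})^T) · ‖φ^L(ω_j)‖_2), where x_min = min_j |x_j| and σ_min((Φ^{M−L})^T) is the smallest nonzero singular value of (Φ^{M−L})^T. -/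
set_option linter.unusedSectionVars false
set_option maxHeartbeats 1000000

open scoped Real
open Matrix Finset

/-- The `(L+1) × s` Vandermonde matrix with columns `φ^L(ω_j)`. -/
noncomputable def vand (L s : ℕ) (ω : Fin s → ℝ) : Matrix (Fin (L + 1)) (Fin s) ℂ :=
  Matrix.of fun k j =>
    Complex.exp (-(2 * Real.pi * Complex.I * ((k : ℕ) : ℂ) * (ω j : ℂ)))

/-- The spectral norm (largest singular value) of a matrix: the `ℓ² → ℓ²` operator norm. -/
noncomputable def mopNorm {m n : Type*} [Fintype m] [Fintype n] [DecidableEq n]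
    (A : Matrix m n ℂ) : ℝ :=
  ‖LinearMap.toContinuousLinearMap (Matrix.toEuclideanLin A)‖

/-- The smallest nonzero singular value of a matrix: the infimum of `‖A v‖` over unit
vectors `v` orthogonal to the kernel of `A`. -/
noncomputable def sigmaMinNZ {m n : Type*} [Fintype m] [Fintype n] [DecidableEq n]
    (A : Matrix m n ℂ) : ℝ :=
  sInf {r | ∃ v : EuclideanSpace ℂ n,
    v ∈ (LinearMap.ker (Matrix.toEuclideanLin A))ᗮ ∧ ‖v‖ = 1 ∧
      r = ‖Matrix.toEuclideanLin A v‖}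

/-- The rectangular "diagonal" matrix with diagonal entries `σ 0, σ 1, …`. -/
noncomputable def svdDiag (m n : ℕ) (σ : ℕ → ℝ) : Matrix (Fin m) (Fin n) ℂ :=
  Matrix.of fun k l => if (k : ℕ) = (l : ℕ) then ((σ (k : ℕ) : ℝ) : ℂ) else 0

namespace Aux

lemma toEL_mul {m n k : Type*} [Fintype m] [Fintype n] [Fintype k] [DecidableEq n] [DecidableEq k]
    (A : Matrix m n ℂ) (B : Matrix n k ℂ) :
    Matrix.toEuclideanLin (A * B) = (Matrix.toEuclideanLin A) ∘ₗ (Matrix.toEuclideanLin B) := by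
  rw [Matrix.toEuclideanLin_eq_toLin, Matrix.toLin_mul _ (PiLp.basisFun 2 ℂ n) _,
    ← Matrix.toEuclideanLin_eq_toLin, ← Matrix.toEuclideanLin_eq_toLin]

lemma toEL_one {m : Type*} [Fintype m] [DecidableEq m] :
    Matrix.toEuclideanLin (1 : Matrix m m ℂ) = LinearMap.id := by
  rw [Matrix.toEuclideanLin_eq_toLin, Matrix.toLin_one]

lemma unitary_norm {m : Type*} [Fintype m] [DecidableEq m] (U : Matrix m m ℂ)
    (hU : U ∈ Matrix.unitaryGroup m ℂ) (v : EuclideanSpace ℂ m) :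
    ‖Matrix.toEuclideanLin U v‖ = ‖v‖ := by
  have h1 : Uᴴ * U = 1 := by
    have := hU.1
    rwa [Matrix.star_eq_conjTranspose] at this
  have hadj : (Matrix.toEuclideanLin U).adjoint (Matrix.toEuclideanLin U v) = v := by
    rw [← Matrix.toEuclideanLin_conjTranspose_eq_adjoint]
    have : Matrix.toEuclideanLin Uᴴ (Matrix.toEuclideanLin U v)
        = Matrix.toEuclideanLin (Uᴴ * U) v := by rw [toEL_mul]; rfl
    rw [this, h1, toEL_one]; rfl
  have h2 : (‖Matrix.toEuclideanLin U v‖ : ℝ)^2 = ‖v‖^2 := by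
    rw [← @inner_self_eq_norm_sq ℂ, ← @inner_self_eq_norm_sq ℂ]
    rw [← LinearMap.adjoint_inner_right (Matrix.toEuclideanLin U) v (Matrix.toEuclideanLin U v), hadj]
  have := congrArg Real.sqrt h2
  simpa [Real.sqrt_sq, norm_nonneg] using this

end Aux


namespace Aux2
variable {m n : Type*} [Fintype m] [Fintype n] [DecidableEq n]

lemma mopNorm_nonneg (A : Matrix m n ℂ) : 0 ≤ mopNorm A := norm_nonneg _

lemma norm_toEL_le (A : Matrix m n ℂ) (v : EuclideanSpace ℂ n) :
    ‖Matrix.toEuclideanLin A v‖ ≤ mopNorm A * ‖v‖ := by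
  have := (LinearMap.toContinuousLinearMap (Matrix.toEuclideanLin A)).le_opNorm v
  simpa [mopNorm] using this

lemma mopNorm_le_bound (A : Matrix m n ℂ) (c : ℝ) (hc : 0 ≤ c)
    (h : ∀ v : EuclideanSpace ℂ n, ‖Matrix.toEuclideanLin A v‖ ≤ c * ‖v‖) : mopNorm A ≤ c := by
  apply ContinuousLinearMap.opNorm_le_bound _ hc
  intro v
  simpa using h v

lemma toEL_add (A B : Matrix m n ℂ) :
    Matrix.toEuclideanLin (A + B) = Matrix.toEuclideanLin A + Matrix.toEuclideanLin B :=
  map_add _ _ _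

end Aux2

namespace Aux3

lemma svd_mulVec_apply (m n : ℕ) (σ : ℕ → ℝ) (v : Fin n → ℂ) (k : Fin m) :
    (svdDiag m n σ *ᵥ v) k = if h : (k : ℕ) < n then (σ (k : ℕ) : ℂ) * v ⟨k, h⟩ else 0 := by
  unfold svdDiag
  simp only [Matrix.mulVec, dotProduct, Matrix.of_apply]
  split
  · next h =>
    rw [Finset.sum_eq_single (⟨(k : ℕ), h⟩ : Fin n)]
    · simp
    · intro l _ hl
      have : (k : ℕ) ≠ (l : ℕ) := by
        intro he; apply hl; apply Fin.ext; simp [← he]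
      simp [this]
    · simp
  · next h =>
    apply Finset.sum_eq_zero
    intro l _
    have : (k : ℕ) ≠ (l : ℕ) := by
      intro he; exact h (he ▸ l.2)
    simp [this]

lemma sum_norm_sq_eq (n : ℕ) (v : EuclideanSpace ℂ (Fin n)) :
    ∑ i : Fin n, ‖v i‖ ^ 2 = ∑ i ∈ Finset.range n, (if h : i < n then ‖v ⟨i, h⟩‖ ^ 2 else 0) := by
  rw [← Fin.sum_univ_eq_sum_range (fun i => if h : i < n then ‖v ⟨i, h⟩‖ ^ 2 else 0)]
  apply Finset.sum_congr rfl
  intro i _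
  rw [dif_pos i.2]

lemma svd_norm_le (m n : ℕ) (σ : ℕ → ℝ) (c : ℝ) (hc : 0 ≤ c) (hσ : ∀ i, i < n → |σ i| ≤ c)
    (v : EuclideanSpace ℂ (Fin n)) :
    ‖Matrix.toEuclideanLin (svdDiag m n σ) v‖ ≤ c * ‖v‖ := by
  rw [EuclideanSpace.norm_eq, EuclideanSpace.norm_eq, ← Real.sqrt_sq hc,
    ← Real.sqrt_mul (sq_nonneg c)]
  apply Real.sqrt_le_sqrt
  set G : ℕ → ℝ := fun i => if h : i < n then ‖v ⟨i, h⟩‖ ^ 2 else 0 with hG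
  have hGnn : ∀ i, 0 ≤ G i := by
    intro i; simp only [hG]; split <;> positivity
  have hterm : ∀ k : Fin m, ‖(Matrix.toEuclideanLin (svdDiag m n σ) v) k‖ ^ 2
      ≤ c ^ 2 * G (k : ℕ) := by
    intro k
    have : (Matrix.toEuclideanLin (svdDiag m n σ) v) k = (svdDiag m n σ *ᵥ v) k := rfl
    rw [this, svd_mulVec_apply]
    simp only [hG]
    split
    · next h =>
      rw [norm_mul, mul_pow]
      have h1 : ‖((σ (k : ℕ) : ℝ) : ℂ)‖ ^ 2 ≤ c ^ 2 := by
        rw [Complex.norm_real, Real.norm_eq_abs]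
        exact pow_le_pow_left₀ (abs_nonneg _) (hσ _ h) 2
      exact mul_le_mul_of_nonneg_right h1 (by positivity)
    · simp
  calc ∑ k : Fin m, ‖(Matrix.toEuclideanLin (svdDiag m n σ) v) k‖ ^ 2
      ≤ ∑ k : Fin m, c ^ 2 * G (k : ℕ) := Finset.sum_le_sum fun k _ => hterm k
    _ = c ^ 2 * ∑ k ∈ Finset.range m, G k := by
        rw [← Finset.mul_sum, Fin.sum_univ_eq_sum_range (fun i => G i)]
    _ ≤ c ^ 2 * ∑ k ∈ Finset.range n, G k := by
        apply mul_le_mul_of_nonneg_left _ (sq_nonneg c)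
        rcases le_total m n with hmn | hnm
        · exact Finset.sum_le_sum_of_subset_of_nonneg
            (Finset.range_subset_range.2 hmn) (fun i _ _ => hGnn i)
        · rw [← Finset.sum_subset (Finset.range_subset_range.2 hnm)
            (fun i _ hi => by simp only [hG]; rw [dif_neg (by simpa using hi)])]
    _ = c ^ 2 * ∑ i : Fin n, ‖v i‖ ^ 2 := by rw [sum_norm_sq_eq]

end Aux3

namespace Aux4
open Aux3

lemma svd_norm_ge (m n s : ℕ) (hsm : s < m) (hsn : s < n) (σ : ℕ → ℝ)
    (hnn : ∀ i, 0 ≤ σ i) (hanti : Antitone σ)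
    (w : EuclideanSpace ℂ (Fin n)) (hsupp : ∀ i : Fin n, s < (i : ℕ) → w i = 0) :
    σ s * ‖w‖ ≤ ‖Matrix.toEuclideanLin (svdDiag m n σ) w‖ := by
  rw [EuclideanSpace.norm_eq, EuclideanSpace.norm_eq, ← Real.sqrt_sq (hnn s),
    ← Real.sqrt_mul (sq_nonneg _)]
  apply Real.sqrt_le_sqrt
  set G : ℕ → ℝ := fun i => if h : i < n then ‖w ⟨i, h⟩‖ ^ 2 else 0 with hG
  set F : ℕ → ℝ := fun i => if h : i < n then (σ i) ^ 2 * ‖w ⟨i, h⟩‖ ^ 2 else 0 with hF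
  have hFnn : ∀ i, 0 ≤ F i := by
    intro i; simp only [hF]; split <;> positivity
  have hterm : ∀ k : Fin m, ‖(Matrix.toEuclideanLin (svdDiag m n σ) w) k‖ ^ 2 = F (k : ℕ) := by
    intro k
    have : (Matrix.toEuclideanLin (svdDiag m n σ) w) k = (svdDiag m n σ *ᵥ w) k := rfl
    rw [this, svd_mulVec_apply]
    simp only [hF]
    split
    · rw [norm_mul, mul_pow, Complex.norm_real, Real.norm_eq_abs, sq_abs]
    · simp
  have hRHS : ∑ k : Fin m, ‖(Matrix.toEuclideanLin (svdDiag m n σ) w) k‖ ^ 2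
      = ∑ k ∈ Finset.range m, F k := by
    rw [← Fin.sum_univ_eq_sum_range (fun i => F i)]
    exact Finset.sum_congr rfl fun k _ => hterm k
  rw [hRHS, sum_norm_sq_eq]
  have hGtrunc : ∑ i ∈ Finset.range n, G i = ∑ i ∈ Finset.range (s + 1), G i := by
    rw [Finset.sum_subset (Finset.range_subset_range.2 (by omega : s + 1 ≤ n))]
    intro i hi hni
    simp only [Finset.mem_range] at hi hni
    simp only [hG]
    rw [dif_pos hi]
    have hsi : s < i := by omega
    rw [hsupp ⟨i, hi⟩ hsi]
    simp
  rw [hGtrunc, Finset.mul_sum]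
  calc ∑ i ∈ Finset.range (s + 1), σ s ^ 2 * G i
      ≤ ∑ i ∈ Finset.range (s + 1), F i := by
        apply Finset.sum_le_sum
        intro i hi
        simp only [Finset.mem_range] at hi
        have hin : i < n := by omega
        simp only [hG, hF, dif_pos hin]
        apply mul_le_mul_of_nonneg_right _ (by positivity)
        exact pow_le_pow_left₀ (hnn s) (hanti (by omega : i ≤ s)) 2
    _ ≤ ∑ i ∈ Finset.range m, F i :=
        Finset.sum_le_sum_of_subset_of_nonneg (Finset.range_subset_range.2 (by omega))
          (fun i _ _ => hFnn i)

lemma diag_contraction {m : Type*} [Fintype m] [DecidableEq m] (d : m → ℂ)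
    (hd : ∀ i, ‖d i‖ ≤ 1) (v : EuclideanSpace ℂ m) :
    ‖Matrix.toEuclideanLin (Matrix.diagonal d) v‖ ≤ ‖v‖ := by
  rw [EuclideanSpace.norm_eq, EuclideanSpace.norm_eq]
  apply Real.sqrt_le_sqrt
  apply Finset.sum_le_sum
  intro i _
  have : (Matrix.toEuclideanLin (Matrix.diagonal d) v) i = (Matrix.diagonal d *ᵥ v) i := rfl
  rw [this, Matrix.mulVec_diagonal, norm_mul]
  have h1 : ‖d i‖ * ‖v i‖ ≤ 1 * ‖v i‖ := mul_le_mul_of_nonneg_right (hd i) (norm_nonneg _)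
  rw [one_mul] at h1
  exact pow_le_pow_left₀ (by positivity) h1 2

end Aux4


namespace Aux5
variable {m n : Type*} [Fintype m] [Fintype n] [DecidableEq n]

lemma sig_set_bddBelow (A : Matrix m n ℂ) :
    BddBelow {r | ∃ v : EuclideanSpace ℂ n,
      v ∈ (LinearMap.ker (Matrix.toEuclideanLin A))ᗮ ∧ ‖v‖ = 1 ∧
        r = ‖Matrix.toEuclideanLin A v‖} := by
  refine ⟨0, fun r hr => ?_⟩
  obtain ⟨v, _, _, hr⟩ := hr
  rw [hr]; exact norm_nonneg _

lemma sig_nonneg (A : Matrix m n ℂ) : 0 ≤ sigmaMinNZ A := by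
  apply Real.sInf_nonneg
  rintro r ⟨v, _, _, rfl⟩
  exact norm_nonneg _

lemma sig_mul_norm_le (A : Matrix m n ℂ) (v : EuclideanSpace ℂ n)
    (hv : v ∈ (LinearMap.ker (Matrix.toEuclideanLin A))ᗮ) :
    sigmaMinNZ A * ‖v‖ ≤ ‖Matrix.toEuclideanLin A v‖ := by
  rcases eq_or_ne v 0 with rfl | hv0
  · simp
  have hnv : (0:ℝ) < ‖v‖ := norm_pos_iff.mpr hv0
  have hmem : (‖v‖⁻¹ * ‖Matrix.toEuclideanLin A v‖) ∈ {r | ∃ u : EuclideanSpace ℂ n,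
      u ∈ (LinearMap.ker (Matrix.toEuclideanLin A))ᗮ ∧ ‖u‖ = 1 ∧
        r = ‖Matrix.toEuclideanLin A u‖} := by
    refine ⟨((‖v‖ : ℂ))⁻¹ • v, Submodule.smul_mem _ _ hv, ?_, ?_⟩
    · rw [norm_smul]; simp [hnv.ne']
    · rw [_root_.map_smul, norm_smul]; simp
  have hle : sigmaMinNZ A ≤ ‖v‖⁻¹ * ‖Matrix.toEuclideanLin A v‖ :=
    csInf_le (sig_set_bddBelow A) hmem
  calc sigmaMinNZ A * ‖v‖ ≤ (‖v‖⁻¹ * ‖Matrix.toEuclideanLin A v‖) * ‖v‖ :=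
        mul_le_mul_of_nonneg_right hle hnv.le
    _ = ‖Matrix.toEuclideanLin A v‖ := by field_simp

lemma sig_pos (A : Matrix m n ℂ)
    (hne : (LinearMap.ker (Matrix.toEuclideanLin A))ᗮ ≠ ⊥) : 0 < sigmaMinNZ A := by
  set K := (LinearMap.ker (Matrix.toEuclideanLin A))ᗮ with hK
  obtain ⟨u, hu, hu0⟩ := Submodule.exists_mem_ne_zero_of_ne_bot hne
  set C : Set (EuclideanSpace ℂ n) := (K : Set _) ∩ Metric.sphere 0 1 with hC
  have hCc : IsCompact C :=
    (isCompact_sphere (0 : EuclideanSpace ℂ n) 1).inter_left K.closed_of_finiteDimensional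
  have hCne : C.Nonempty := by
    refine ⟨((‖u‖ : ℂ))⁻¹ • u, Submodule.smul_mem _ _ hu, ?_⟩
    simp [norm_smul, norm_pos_iff.mpr hu0, (norm_pos_iff.mpr hu0).ne']
  have hcont : Continuous fun v : EuclideanSpace ℂ n => ‖Matrix.toEuclideanLin A v‖ :=
    ((Matrix.toEuclideanLin A).continuous_of_finiteDimensional).norm
  obtain ⟨v0, hv0C, hmin⟩ := hCc.exists_isMinOn hCne hcont.continuousOn
  have hv0K : v0 ∈ K := hv0C.1
  have hv0n : ‖v0‖ = 1 := by simpa using hv0C.2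
  have hAv0 : Matrix.toEuclideanLin A v0 ≠ 0 := by
    intro h0
    have hker : v0 ∈ LinearMap.ker (Matrix.toEuclideanLin A) := h0
    have : v0 = 0 := by
      have := Submodule.mem_orthogonal _ v0 |>.mp hv0K
      have h2 := inner_self_eq_zero (𝕜 := ℂ).mp (this v0 hker)
      exact h2
    rw [this] at hv0n; simp at hv0n
  have hpos : 0 < ‖Matrix.toEuclideanLin A v0‖ := norm_pos_iff.mpr hAv0
  apply lt_of_lt_of_le hpos
  apply le_csInf
  · exact ⟨‖Matrix.toEuclideanLin A v0‖, v0, hv0K, hv0n, rfl⟩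
  · rintro r ⟨v, hvK, hvn, rfl⟩
    exact hmin ⟨hvK, by simpa using hvn⟩

end Aux5

namespace Aux6

lemma vand_surj (s n : ℕ) (hsn : s ≤ n) (z : Fin s → ℂ) (hz : Function.Injective z)
    (A : Matrix (Fin s) (Fin n) ℂ) (hA : ∀ j k, A j k = z j ^ (k : ℕ))
    (y : Fin s → ℂ) : ∃ v : Fin n → ℂ, A *ᵥ v = y := by
  set B := Matrix.vandermonde z with hB
  have hdet : B.det ≠ 0 := by
    rw [Matrix.det_vandermonde]
    apply Finset.prod_ne_zero_iff.mpr
    intro i _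
    apply Finset.prod_ne_zero_iff.mpr
    intro j hj
    rw [Finset.mem_Ioi] at hj
    exact sub_ne_zero.mpr fun he => absurd (hz he) (fun h => lt_irrefl _ (h ▸ hj))
  set c := B⁻¹ *ᵥ y with hc
  have hBc : B *ᵥ c = y := by
    rw [hc, Matrix.mulVec_mulVec, Matrix.mul_nonsing_inv _ (Ne.isUnit hdet), Matrix.one_mulVec]
  refine ⟨fun k => if h : (k : ℕ) < s then c ⟨k, h⟩ else 0, ?_⟩
  funext j'
  set F : ℕ → ℂ := fun k => if h : k < s then z j' ^ k * c ⟨k, h⟩ else 0 with hF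
  have h1 : (A *ᵥ fun k => if h : (k : ℕ) < s then c ⟨k, h⟩ else 0) j'
      = ∑ k ∈ Finset.range n, F k := by
    rw [← Fin.sum_univ_eq_sum_range (fun k => F k)]
    simp only [Matrix.mulVec, dotProduct]
    apply Finset.sum_congr rfl
    intro k _
    simp only [hF, hA]
    split
    · rfl
    · simp
  have h2 : ∑ k ∈ Finset.range n, F k = ∑ k ∈ Finset.range s, F k := by
    rw [Finset.sum_subset (Finset.range_subset_range.2 hsn)]
    intro i _ hni
    simp only [Finset.mem_range] at hni
    simp only [hF]
    rw [dif_neg hni]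
  have h3 : ∑ k ∈ Finset.range s, F k = (B *ᵥ c) j' := by
    rw [← Fin.sum_univ_eq_sum_range (fun k => F k)]
    simp only [Matrix.mulVec, dotProduct]
    apply Finset.sum_congr rfl
    intro k _
    simp only [hF]
    rw [dif_pos k.2]
    rfl
  rw [h1, h2, h3, hBc]

end Aux6

theorem stmt12 (s L M : ℕ) (hs : 1 ≤ s) (hL : 1 ≤ L) (hLM : L < M)
    (hLs : s ≤ L) (hMs : s ≤ M - L + 1)
    (ω : Fin s → ℝ) (hdist : Function.Injective ω)
    (hω : ∀ j, ω j ∈ Set.Ico (0 : ℝ) 1)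
    (x : Fin s → ℂ) (hx : ∀ j, x j ≠ 0)
    (xmin : ℝ) (hxmin : IsLeast (Set.range fun j => ‖x j‖) xmin)
    (H E : Matrix (Fin (L + 1)) (Fin (M - L + 1)) ℂ)
    (hH : H = vand L s ω * Matrix.diagonal x * (vand (M - L) s ω)ᵀ)
    (hE : mopNorm E < sigmaMinNZ H)
    -- a singular value decomposition of the noisy matrix `H^ε = H + E`
    (Uε : Matrix (Fin (L + 1)) (Fin (L + 1)) ℂ)
    (hUε : Uε ∈ Matrix.unitaryGroup (Fin (L + 1)) ℂ)
    (Vε : Matrix (Fin (M - L + 1)) (Fin (M - L + 1)) ℂ)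
    (hVε : Vε ∈ Matrix.unitaryGroup (Fin (M - L + 1)) ℂ)
    (σε : ℕ → ℝ) (hσanti : Antitone σε) (hσnonneg : ∀ i, 0 ≤ σε i)
    (hSVD : H + E = Uε * svdDiag (L + 1) (M - L + 1) σε * Vεᴴ)
    (P2ε : Matrix (Fin (L + 1)) (Fin (L + 1)) ℂ)
    (hP2ε : P2ε = Uε *
      Matrix.diagonal (fun i : Fin (L + 1) => if (i : ℕ) < s then (0 : ℂ) else 1) * Uεᴴ)
    (Rε : ℝ → ℝ)
    (hRε : ∀ t, Rε t = ‖Matrix.toEuclideanLin P2ε (phiVec L t)‖ / ‖phiVec L t‖) :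
    ∀ j, Rε (ω j) ≤
      2 * mopNorm E / (xmin * sigmaMinNZ ((vand (M - L) s ω)ᵀ) * ‖phiVec L (ω j)‖) := by
  intro j
  -- basic unitary facts
  have hUU : Uεᴴ * Uε = 1 := by
    have := hUε.1; rwa [Matrix.star_eq_conjTranspose] at this
  have hVV : Vεᴴ * Vε = 1 := by
    have := hVε.1; rwa [Matrix.star_eq_conjTranspose] at this
  have hUεs : Uεᴴ ∈ Matrix.unitaryGroup (Fin (L + 1)) ℂ := by
    have := Unitary.star_mem hUε; rwa [Matrix.star_eq_conjTranspose] at this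
  have hVεs : Vεᴴ ∈ Matrix.unitaryGroup (Fin (M - L + 1)) ℂ := by
    have := Unitary.star_mem hVε; rwa [Matrix.star_eq_conjTranspose] at this
  -- P2ε is a contraction
  have hP2contr : ∀ u : EuclideanSpace ℂ (Fin (L + 1)),
      ‖Matrix.toEuclideanLin P2ε u‖ ≤ ‖u‖ := by
    intro u
    rw [hP2ε, Aux.toEL_mul, Aux.toEL_mul]
    simp only [LinearMap.comp_apply]
    rw [Aux.unitary_norm Uε hUε]
    calc ‖Matrix.toEuclideanLin
          (Matrix.diagonal (fun i : Fin (L + 1) => if (i : ℕ) < s then (0 : ℂ) else 1))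
          (Matrix.toEuclideanLin Uεᴴ u)‖
        ≤ ‖Matrix.toEuclideanLin Uεᴴ u‖ := by
          apply Aux4.diag_contraction
          intro i; split <;> simp
      _ = ‖u‖ := Aux.unitary_norm Uεᴴ hUεs u
  -- min-max: σε s ≤ ‖E‖ when s < M - L + 1
  have hkey : s < M - L + 1 → σε s ≤ mopNorm E := by
    intro hsn
    set g : {i : Fin (M - L + 1) // (i : ℕ) ≤ s} → EuclideanSpace ℂ (Fin (M - L + 1)) :=
      fun i => Matrix.toEuclideanLin Vε (EuclideanSpace.single i.1 1) with hg
    have hVgi : ∀ i : {i : Fin (M - L + 1) // (i : ℕ) ≤ s},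
        Matrix.toEuclideanLin Vεᴴ (g i) = EuclideanSpace.single i.1 1 := by
      intro i
      simp only [hg]
      rw [← LinearMap.comp_apply, ← Aux.toEL_mul, hVV, Aux.toEL_one]
      rfl
    have hgli : LinearIndependent ℂ g := by
      apply LinearIndependent.of_comp (Matrix.toEuclideanLin Vεᴴ)
      have heq : (Matrix.toEuclideanLin Vεᴴ) ∘ g
          = fun i : {i : Fin (M - L + 1) // (i : ℕ) ≤ s} => EuclideanSpace.single i.1 1 :=
        funext hVgi
      rw [heq]
      have hb := (EuclideanSpace.basisFun (Fin (M - L + 1)) ℂ).toBasis.linearIndependent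
      have hb2 := hb.comp (Subtype.val : {i : Fin (M - L + 1) // (i : ℕ) ≤ s} → Fin (M - L + 1))
        Subtype.val_injective
      simpa [Function.comp_def, OrthonormalBasis.coe_toBasis,
        EuclideanSpace.basisFun_apply] using hb2
    set W1 := Submodule.span ℂ (Set.range g) with hW1
    have hcard : Fintype.card {i : Fin (M - L + 1) // (i : ℕ) ≤ s} = s + 1 := by
      have e : {i : Fin (M - L + 1) // (i : ℕ) ≤ s} ≃ Fin (s + 1) :=
        { toFun := fun i => ⟨i.1, Nat.lt_succ_of_le i.2⟩
          invFun := fun i => ⟨⟨i.1, by omega⟩, Nat.le_of_lt_succ i.2⟩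
          left_inv := fun i => Subtype.ext (Fin.ext rfl)
          right_inv := fun i => Fin.ext rfl }
      rw [Fintype.card_congr e, Fintype.card_fin]
    have hW1rank : Module.finrank ℂ W1 = s + 1 := by
      rw [hW1, finrank_span_eq_card hgli, hcard]
    set Kr := LinearMap.ker (Matrix.toEuclideanLin H) with hKrdef
    have hkerle : LinearMap.ker (Matrix.toEuclideanLin ((vand (M - L) s ω)ᵀ)) ≤ Kr := by
      intro v hv
      rw [LinearMap.mem_ker] at hv
      rw [hKrdef, LinearMap.mem_ker, hH, Aux.toEL_mul, LinearMap.comp_apply, hv, map_zero]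
    have hKrrank : M - L + 1 ≤ Module.finrank ℂ Kr + s := by
      have h1 := LinearMap.finrank_range_add_finrank_ker
        (Matrix.toEuclideanLin ((vand (M - L) s ω)ᵀ))
      have h2 : Module.finrank ℂ
          (LinearMap.range (Matrix.toEuclideanLin ((vand (M - L) s ω)ᵀ))) ≤ s := by
        have := Submodule.finrank_le
          (LinearMap.range (Matrix.toEuclideanLin ((vand (M - L) s ω)ᵀ)))
        simpa [finrank_euclideanSpace_fin] using this
      have h3 : Module.finrank ℂ (EuclideanSpace ℂ (Fin (M - L + 1))) = M - L + 1 :=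
        finrank_euclideanSpace_fin
      have h4 := Submodule.finrank_mono hkerle
      omega
    have hsupfin : Module.finrank ℂ ↥(W1 ⊔ Kr) ≤ M - L + 1 := by
      have := Submodule.finrank_le (W1 ⊔ Kr)
      simpa [finrank_euclideanSpace_fin] using this
    have hinfeq := Submodule.finrank_sup_add_finrank_inf_eq W1 Kr
    have hinfpos : W1 ⊓ Kr ≠ ⊥ := by
      intro hbot
      rw [hbot, finrank_bot] at hinfeq
      omega
    obtain ⟨u, hu, hu0⟩ := Submodule.exists_mem_ne_zero_of_ne_bot hinfpos
    obtain ⟨huW, huK⟩ := Submodule.mem_inf.mp hu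
    set u1 : EuclideanSpace ℂ (Fin (M - L + 1)) := ((‖u‖ : ℂ))⁻¹ • u with hu1def
    have hunpos : (0 : ℝ) < ‖u‖ := norm_pos_iff.mpr hu0
    have hu1n : ‖u1‖ = 1 := by
      rw [hu1def, norm_smul]; simp [hunpos.ne']
    have hu1W : u1 ∈ W1 := Submodule.smul_mem _ _ huW
    have hu1K : u1 ∈ Kr := Submodule.smul_mem _ _ huK
    have hsupp : ∀ i : Fin (M - L + 1), s < (i : ℕ) →
        (Matrix.toEuclideanLin Vεᴴ u1) i = 0 := by
      set T : Submodule ℂ (EuclideanSpace ℂ (Fin (M - L + 1))) :=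
        { carrier := {w | ∀ i : Fin (M - L + 1), s < (i : ℕ) → w i = 0}
          add_mem' := by
            intro a b ha hb i hi
            show a i + b i = 0
            rw [ha i hi, hb i hi, add_zero]
          zero_mem' := fun i hi => rfl
          smul_mem' := by
            intro c a ha i hi
            show c * a i = 0
            rw [ha i hi, mul_zero] } with hT
      have hW1T : W1 ≤ Submodule.comap (Matrix.toEuclideanLin Vεᴴ) T := by
        rw [hW1, Submodule.span_le]
        rintro _ ⟨i, rfl⟩
        simp only [Set.mem_setOf_eq, SetLike.mem_coe, Submodule.mem_comap]
        rw [hVgi i]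
        intro i' hi'
        rw [EuclideanSpace.single_apply, if_neg]
        intro he
        rw [he] at hi'
        omega
      have := hW1T hu1W
      rw [Submodule.mem_comap] at this
      exact this
    have hlow : σε s ≤ ‖Matrix.toEuclideanLin (H + E) u1‖ := by
      rw [hSVD, Aux.toEL_mul, Aux.toEL_mul]
      simp only [LinearMap.comp_apply]
      rw [Aux.unitary_norm Uε hUε]
      have h5 := Aux4.svd_norm_ge (L + 1) (M - L + 1) s (by omega) hsn σε hσnonneg hσanti
        (Matrix.toEuclideanLin Vεᴴ u1) hsupp
      calc σε s = σε s * ‖Matrix.toEuclideanLin Vεᴴ u1‖ := by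
            rw [Aux.unitary_norm Vεᴴ hVεs, hu1n, mul_one]
        _ ≤ _ := h5
    have hup : ‖Matrix.toEuclideanLin (H + E) u1‖ ≤ mopNorm E := by
      have hadd : Matrix.toEuclideanLin (H + E) u1
          = Matrix.toEuclideanLin H u1 + Matrix.toEuclideanLin E u1 := by
        rw [Aux2.toEL_add]; rfl
      have hz : Matrix.toEuclideanLin H u1 = 0 := LinearMap.mem_ker.mp hu1K
      rw [hadd, hz, zero_add]
      calc ‖Matrix.toEuclideanLin E u1‖ ≤ mopNorm E * ‖u1‖ := Aux2.norm_toEL_le E u1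
        _ = mopNorm E := by rw [hu1n, mul_one]
    linarith
  -- ‖P2ε (H + E)‖ ≤ ‖E‖
  have hbound : mopNorm (P2ε * (H + E)) ≤ mopNorm E := by
    set σ' : ℕ → ℝ := fun k => if k < s then 0 else σε k with hσ'
    have hmatid : P2ε * (H + E) = Uε * svdDiag (L + 1) (M - L + 1) σ' * Vεᴴ := by
      rw [hP2ε, hSVD]
      have hassoc : Uε * Matrix.diagonal (fun i : Fin (L + 1) =>
            if (i : ℕ) < s then (0 : ℂ) else 1) * Uεᴴ *
            (Uε * svdDiag (L + 1) (M - L + 1) σε * Vεᴴ)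
          = Uε * (Matrix.diagonal (fun i : Fin (L + 1) =>
            if (i : ℕ) < s then (0 : ℂ) else 1) * svdDiag (L + 1) (M - L + 1) σε) * Vεᴴ := by
        rw [Matrix.mul_assoc, Matrix.mul_assoc, Matrix.mul_assoc, Matrix.mul_assoc,
          ← Matrix.mul_assoc Uεᴴ Uε, hUU, Matrix.one_mul]
        simp only [Matrix.mul_assoc]
      rw [hassoc]
      congr 2
      ext k l
      rw [Matrix.diagonal_mul]
      simp only [svdDiag, Matrix.of_apply, hσ']
      by_cases hkl : (k : ℕ) = (l : ℕ)
      · simp only [if_pos hkl]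
        by_cases hks : (k : ℕ) < s
        · simp [hks]
        · simp [hks]
      · simp [hkl]
    rw [hmatid]
    apply Aux2.mopNorm_le_bound _ _ (Aux2.mopNorm_nonneg E)
    intro v
    rw [Aux.toEL_mul, Aux.toEL_mul]
    simp only [LinearMap.comp_apply]
    rw [Aux.unitary_norm Uε hUε]
    have h6 : ∀ i, i < M - L + 1 → |σ' i| ≤ mopNorm E := by
      intro i hi
      by_cases his : i < s
      · simp only [hσ', if_pos his, abs_zero]
        exact Aux2.mopNorm_nonneg E
      · push_neg at his
        have hsn : s < M - L + 1 := by omega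
        have h7 := hkey hsn
        have h8 : σε i ≤ σε s := hσanti his
        simp only [hσ', if_neg (not_lt.mpr his)]
        rw [abs_of_nonneg (hσnonneg i)]
        linarith
    calc ‖Matrix.toEuclideanLin (svdDiag (L + 1) (M - L + 1) σ')
          (Matrix.toEuclideanLin Vεᴴ v)‖
        ≤ mopNorm E * ‖Matrix.toEuclideanLin Vεᴴ v‖ :=
          Aux3.svd_norm_le _ _ _ _ (Aux2.mopNorm_nonneg E) h6 _
      _ = mopNorm E * ‖v‖ := by rw [Aux.unitary_norm Vεᴴ hVεs]
  -- ‖P2ε E‖ ≤ ‖E‖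
  have hPE : mopNorm (P2ε * E) ≤ mopNorm E := by
    apply Aux2.mopNorm_le_bound _ _ (Aux2.mopNorm_nonneg E)
    intro v
    rw [Aux.toEL_mul]
    simp only [LinearMap.comp_apply]
    calc ‖Matrix.toEuclideanLin P2ε (Matrix.toEuclideanLin E v)‖
        ≤ ‖Matrix.toEuclideanLin E v‖ := hP2contr _
      _ ≤ mopNorm E * ‖v‖ := Aux2.norm_toEL_le E v
  -- ‖P2ε H‖ ≤ 2 ‖E‖
  have hPH : mopNorm (P2ε * H) ≤ 2 * mopNorm E := by
    apply Aux2.mopNorm_le_bound _ _ (by have := Aux2.mopNorm_nonneg E; linarith)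
    intro v
    have hdec : P2ε * H = P2ε * (H + E) - P2ε * E := by
      rw [Matrix.mul_add]; abel
    rw [hdec, map_sub]
    simp only [LinearMap.sub_apply]
    calc ‖Matrix.toEuclideanLin (P2ε * (H + E)) v - Matrix.toEuclideanLin (P2ε * E) v‖
        ≤ ‖Matrix.toEuclideanLin (P2ε * (H + E)) v‖
          + ‖Matrix.toEuclideanLin (P2ε * E) v‖ := norm_sub_le _ _
      _ ≤ mopNorm E * ‖v‖ + mopNorm E * ‖v‖ := by
          apply add_le_add
          · exact le_trans (Aux2.norm_toEL_le _ v)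
              (mul_le_mul_of_nonneg_right hbound (norm_nonneg v))
          · exact le_trans (Aux2.norm_toEL_le _ v)
              (mul_le_mul_of_nonneg_right hPE (norm_nonneg v))
      _ = 2 * mopNorm E * ‖v‖ := by ring
  -- the Vandermonde system: find w in (ker Ψ)ᗮ with Ψ w = e_j
  set z : Fin s → ℂ := fun j' => Complex.exp (-(2 * Real.pi * Complex.I * (ω j' : ℂ)))
    with hzdef
  have hΨent : ∀ (j' : Fin s) (k : Fin (M - L + 1)),
      ((vand (M - L) s ω)ᵀ) j' k = z j' ^ (k : ℕ) := by
    intro j' k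
    show Complex.exp (-(2 * Real.pi * Complex.I * ((k : ℕ) : ℂ) * (ω j' : ℂ))) = _
    simp only [hzdef]
    rw [← Complex.exp_nat_mul]
    congr 1
    ring
  have hzinj : Function.Injective z := by
    intro a b hab
    simp only [hzdef] at hab
    rw [Complex.exp_eq_exp_iff_exists_int] at hab
    obtain ⟨nn, hnn⟩ := hab
    have h2πI : (2 * (Real.pi : ℂ) * Complex.I) ≠ 0 := by
      simp [Real.pi_ne_zero, Complex.I_ne_zero]
    have hmul : (2 * (Real.pi : ℂ) * Complex.I)
        * (((ω b : ℂ)) - (ω a : ℂ) - (nn : ℂ)) = 0 := by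
      linear_combination hnn
    have h0 : ((ω b : ℂ)) - (ω a : ℂ) - (nn : ℂ) = 0 := by
      rcases mul_eq_zero.mp hmul with h | h
      · exact absurd h h2πI
      · exact h
    have hre : ω b - ω a - (nn : ℝ) = 0 := by
      have := congrArg Complex.re h0
      simpa using this
    have ha := hω a
    have hb := hω b
    rw [Set.mem_Ico] at ha hb
    have h4 : (nn : ℝ) < 1 := by linarith [ha.1, hb.2]
    have h5 : (-1 : ℝ) < (nn : ℝ) := by linarith [ha.2, hb.1]
    have hnn0 : nn = 0 := by
      have h6 : nn < 1 := by exact_mod_cast h4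
      have h7 : -1 < nn := by exact_mod_cast h5
      omega
    rw [hnn0] at hre
    push_cast at hre
    exact hdist (by linarith : ω a = ω b)
  obtain ⟨v, hv⟩ := Aux6.vand_surj s (M - L + 1) hMs z hzinj ((vand (M - L) s ω)ᵀ) hΨent
    (Pi.single j 1)
  set vE : EuclideanSpace ℂ (Fin (M - L + 1)) := WithLp.toLp 2 v with hvE
  have hAvE : Matrix.toEuclideanLin ((vand (M - L) s ω)ᵀ) vE
      = EuclideanSpace.single j 1 := by
    ext i
    show ((vand (M - L) s ω)ᵀ *ᵥ v) i = _
    rw [hv]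
    rw [EuclideanSpace.single_apply, Pi.single_apply]
  set Kp := (LinearMap.ker (Matrix.toEuclideanLin ((vand (M - L) s ω)ᵀ)))ᗮ with hKp
  set w : EuclideanSpace ℂ (Fin (M - L + 1)) := ↑(Kp.orthogonalProjectionOnto vE) with hw
  have hwKp : w ∈ Kp := (Kp.orthogonalProjectionOnto vE).2
  have hdiffKer : vE - w ∈ LinearMap.ker (Matrix.toEuclideanLin ((vand (M - L) s ω)ᵀ)) := by
    have hperp : vE - w ∈ Kpᗮ := Kp.sub_starProjection_mem_orthogonal vE
    rwa [hKp, Submodule.orthogonal_orthogonal] at hperp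
  have hAw : Matrix.toEuclideanLin ((vand (M - L) s ω)ᵀ) w = EuclideanSpace.single j 1 := by
    have h0 : Matrix.toEuclideanLin ((vand (M - L) s ω)ᵀ) (vE - w) = 0 :=
      LinearMap.mem_ker.mp hdiffKer
    rw [map_sub] at h0
    rw [← hAvE]
    exact (sub_eq_zero.mp h0).symm
  have hwne : w ≠ 0 := by
    intro h
    have h1 : (EuclideanSpace.single j (1 : ℂ)) j = 0 := by
      rw [← hAw, h, map_zero]; rfl
    rw [EuclideanSpace.single_apply, if_pos rfl] at h1
    exact one_ne_zero h1
  have hKpne : Kp ≠ ⊥ := by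
    intro h
    rw [h, Submodule.mem_bot] at hwKp
    exact hwne hwKp
  set σΨ := sigmaMinNZ ((vand (M - L) s ω)ᵀ) with hσΨdef
  have hσpos : 0 < σΨ := Aux5.sig_pos _ hKpne
  have hσw : σΨ * ‖w‖ ≤ 1 := by
    have := Aux5.sig_mul_norm_le ((vand (M - L) s ω)ᵀ) w hwKp
    rwa [hAw, EuclideanSpace.norm_single, norm_one] at this
  have hHw : Matrix.toEuclideanLin H w = x j • phiVec L (ω j) := by
    rw [hH, Aux.toEL_mul]
    simp only [LinearMap.comp_apply]
    rw [hAw]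
    ext k
    show ((vand L s ω * Matrix.diagonal x) *ᵥ Pi.single j 1) k = x j * phiVec L (ω j) k
    rw [Matrix.mulVec_single]
    show (vand L s ω * Matrix.diagonal x) k j * 1 = _
    rw [Matrix.mul_diagonal, mul_one, mul_comm]
    rfl
  have hchain : ‖x j‖ * ‖Matrix.toEuclideanLin P2ε (phiVec L (ω j))‖
      ≤ 2 * mopNorm E * ‖w‖ := by
    have h8 : Matrix.toEuclideanLin (P2ε * H) w
        = x j • Matrix.toEuclideanLin P2ε (phiVec L (ω j)) := by
      rw [Aux.toEL_mul]
      simp only [LinearMap.comp_apply]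
      rw [hHw, _root_.map_smul]
    have h9 := Aux2.norm_toEL_le (P2ε * H) w
    rw [h8, norm_smul] at h9
    calc ‖x j‖ * ‖Matrix.toEuclideanLin P2ε (phiVec L (ω j))‖
        = ‖x j‖ * ‖Matrix.toEuclideanLin P2ε (phiVec L (ω j))‖ := by
          rfl
      _ ≤ mopNorm (P2ε * H) * ‖w‖ := h9
      _ ≤ 2 * mopNorm E * ‖w‖ := mul_le_mul_of_nonneg_right hPH (norm_nonneg w)
  have hxj : xmin ≤ ‖x j‖ := hxmin.2 ⟨j, rfl⟩
  have hxminpos : 0 < xmin := by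
    obtain ⟨j0, hj0⟩ := hxmin.1
    rw [← hj0]
    exact norm_pos_iff.mpr (hx j0)
  have hφpos : 0 < ‖phiVec L (ω j)‖ := by
    apply norm_pos_iff.mpr
    intro h
    have h1 : phiVec L (ω j) 0 = 0 := by rw [h]; rfl
    unfold phiVec at h1
    exact Complex.exp_ne_zero _ h1
  have hkey2 : xmin * σΨ * ‖Matrix.toEuclideanLin P2ε (phiVec L (ω j))‖
      ≤ 2 * mopNorm E := by
    calc xmin * σΨ * ‖Matrix.toEuclideanLin P2ε (phiVec L (ω j))‖
        ≤ ‖x j‖ * σΨ * ‖Matrix.toEuclideanLin P2ε (phiVec L (ω j))‖ := by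
          apply mul_le_mul_of_nonneg_right _ (norm_nonneg _)
          exact mul_le_mul_of_nonneg_right hxj hσpos.le
      _ = σΨ * (‖x j‖ * ‖Matrix.toEuclideanLin P2ε (phiVec L (ω j))‖) := by
          ring
      _ ≤ σΨ * (2 * mopNorm E * ‖w‖) := mul_le_mul_of_nonneg_left hchain hσpos.le
      _ = 2 * mopNorm E * (σΨ * ‖w‖) := by ring
      _ ≤ 2 * mopNorm E * 1 := by
          apply mul_le_mul_of_nonneg_left hσw
          have := Aux2.mopNorm_nonneg E
          linarith
      _ = 2 * mopNorm E := mul_one _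
  rw [hRε]
  rw [div_le_div_iff₀ hφpos (mul_pos (mul_pos hxminpos hσpos) hφpos)]
  nlinarith [mul_le_mul_of_nonneg_right hkey2 hφpos.le,
    norm_nonneg (Matrix.toEuclideanLin P2ε (phiVec L (ω j)))]
end
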